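/- (O(1/t) convergence of proximal gradient descent) Let ξ = f + g with f convex differentiable with C_f-Lipschitz gradient, g convex, and suppose ξ attains its minimum at x*. With constant step size η ∈ (0, 1/C_f] and iterates x^{t+1} = prox_{ηg}(x^t − η∇f(x^t)), for every t ≥ 1: ξ(x^t) − ξ(x*) ≤ ‖x⁰ − x*‖²/(2tη). -/

import Mathlib

open RealInnerProductSpace

variable {n : ℕ}

/-- The convex subdifferential of `g` at `x`. -/
def subdiff (g : EuclideanSpace ℝ (Fin n) → ℝ) (x : EuclideanSpace ℝ (Fin n)) :
    Set (EuclideanSpace ℝ (Fin n)) :=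
  {v | ∀ y, g x + ⟪v, y - x⟫ ≤ g y}

/-- `z` is the value of the proximal operator `prox_{ηg}` at `v`, i.e. `z` minimizes
`x ↦ g x + (1/(2η))‖x − v‖²`. -/
def IsProx (g : EuclideanSpace ℝ (Fin n) → ℝ) (η : ℝ)
    (v z : EuclideanSpace ℝ (Fin n)) : Prop :=
  ∀ x, g z + 1 / (2 * η) * ‖z - v‖ ^ 2 ≤ g x + 1 / (2 * η) * ‖x - v‖ ^ 2

open scoped Classical in
/-- The proximal operator `prox_{ηg}` (defined via choice of a minimizer). -/
noncomputable def prox (g : EuclideanSpace ℝ (Fin n) → ℝ) (η : ℝ)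
    (v : EuclideanSpace ℝ (Fin n)) : EuclideanSpace ℝ (Fin n) :=
  if h : ∃ z, IsProx g η v z then h.choose else 0

open Topology Filter

private lemma aux_limit {A K : ℝ} (hK : 0 ≤ K) (h : ∀ θ : ℝ, 0 < θ → θ ≤ 1 → A ≤ θ * K) :
    A ≤ 0 := by
  by_contra hA
  push_neg at hA
  rcases eq_or_lt_of_le hK with hK0 | hK0
  · have := h 1 one_pos le_rfl
    rw [← hK0] at this; linarith
  · have hθpos : 0 < min 1 (A / (2 * K)) := lt_min one_pos (div_pos hA (by linarith))
    have h1 := h _ hθpos (min_le_left _ _)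
    have h2 : min 1 (A / (2 * K)) * K ≤ (A / (2 * K)) * K :=
      mul_le_mul_of_nonneg_right (min_le_right _ _) hK
    have h3 : (A / (2 * K)) * K = A / 2 := by field_simp
    linarith

private lemma hasDerivAt_line (f : EuclideanSpace ℝ (Fin n) → ℝ) (hfd : Differentiable ℝ f)
    (p d : EuclideanSpace ℝ (Fin n)) (s : ℝ) :
    HasDerivAt (fun s : ℝ => f (p + s • d)) ⟪gradient f (p + s • d), d⟫ s := by
  have hline : HasDerivAt (fun s : ℝ => p + s • d) d s := by
    simpa using ((hasDerivAt_id s).smul_const d).const_add p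
  have hF := hasGradientAt_iff_hasFDerivAt.mp (hfd (p + s • d)).hasGradientAt
  have := hF.comp_hasDerivAt s hline
  simpa [Function.comp_def, InnerProductSpace.toDual_apply_apply] using this

private lemma descent_lemma (f : EuclideanSpace ℝ (Fin n) → ℝ) (hfd : Differentiable ℝ f)
    (Cf : ℝ) (hlip : ∀ x y, ‖gradient f x - gradient f y‖ ≤ Cf * ‖x - y‖)
    (p y : EuclideanSpace ℝ (Fin n)) :
    f y ≤ f p + ⟪gradient f p, y - p⟫ + Cf / 2 * ‖y - p‖ ^ 2 := by
  set d := y - p with hd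
  set A := (⟪gradient f p, d⟫ : ℝ) with hA
  set ψ : ℝ → ℝ := fun s => f (p + s • d) - s * A - Cf * ‖d‖ ^ 2 / 2 * s ^ 2 with hψdef
  have hψ : ∀ s : ℝ, HasDerivAt ψ (⟪gradient f (p + s • d), d⟫ - A - Cf * ‖d‖ ^ 2 * s) s := by
    intro s
    have h1 := hasDerivAt_line f hfd p d s
    have h2 : HasDerivAt (fun s : ℝ => s * A) A s := by
      simpa using (hasDerivAt_id s).mul_const A
    have h3 : HasDerivAt (fun s : ℝ => Cf * ‖d‖ ^ 2 / 2 * s ^ 2) (Cf * ‖d‖ ^ 2 * s) s := by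
      have := (hasDerivAt_pow 2 s).const_mul (Cf * ‖d‖ ^ 2 / 2)
      exact this.congr_deriv (by ring)
    exact (h1.sub h2).sub h3
  have hanti : AntitoneOn ψ (Set.Icc 0 1) := by
    apply antitoneOn_of_deriv_nonpos (convex_Icc 0 1)
    · exact fun s _ => (hψ s).continuousAt.continuousWithinAt
    · intro s hs
      exact ((hψ s).differentiableAt).differentiableWithinAt
    · intro s hs
      rw [interior_Icc] at hs
      rw [(hψ s).deriv]
      have hb : ⟪gradient f (p + s • d), d⟫ - A ≤ Cf * ‖d‖ ^ 2 * s := by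
        have h1 : ⟪gradient f (p + s • d), d⟫ - A = ⟪gradient f (p + s • d) - gradient f p, d⟫ := by
          rw [inner_sub_left]
        have h2 := real_inner_le_norm (gradient f (p + s • d) - gradient f p) d
        have h3 := hlip (p + s • d) p
        have h4 : p + s • d - p = s • d := by abel
        rw [h4, norm_smul, Real.norm_eq_abs, abs_of_pos hs.1] at h3
        have h5 : ‖gradient f (p + s • d) - gradient f p‖ * ‖d‖ ≤ Cf * (s * ‖d‖) * ‖d‖ :=
          mul_le_mul_of_nonneg_right h3 (norm_nonneg d)
        rw [h1]
        calc ⟪gradient f (p + s • d) - gradient f p, d⟫ ≤ _ := h2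
        _ ≤ Cf * (s * ‖d‖) * ‖d‖ := h5
        _ = Cf * ‖d‖ ^ 2 * s := by ring
      linarith
  have h01 := hanti (Set.mem_Icc.mpr ⟨le_rfl, zero_le_one⟩)
    (Set.mem_Icc.mpr ⟨zero_le_one, le_rfl⟩) zero_le_one
  have hψ0 : ψ 0 = f p := by simp [hψdef]
  have hψ1 : ψ 1 = f y - A - Cf * ‖d‖ ^ 2 / 2 := by
    simp [hψdef, hd]
  rw [hψ0, hψ1] at h01
  nlinarith [norm_nonneg d]

private lemma convex_grad_ineq (f : EuclideanSpace ℝ (Fin n) → ℝ)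
    (hf : ConvexOn ℝ Set.univ f) (hfd : Differentiable ℝ f)
    (p y : EuclideanSpace ℝ (Fin n)) :
    f p + ⟪gradient f p, y - p⟫ ≤ f y := by
  set d := y - p with hd
  have hline := hasDerivAt_line f hfd p d 0
  have h0 : p + (0:ℝ) • d = p := by simp
  rw [h0] at hline
  have htends := hasDerivAt_iff_tendsto_slope.mp hline
  have hmono : 𝓝[>] (0:ℝ) ≤ 𝓝[≠] (0:ℝ) :=
    nhdsWithin_mono 0 (fun θ (hθ : θ ∈ Set.Ioi (0:ℝ)) => ne_of_gt hθ)
  have htends' := htends.mono_left hmono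
  have key : ⟪gradient f p, d⟫ ≤ f y - f p := by
    refine le_of_tendsto htends' ?_
    filter_upwards [Ioc_mem_nhdsGT_of_mem (Set.left_mem_Ico.mpr one_pos)] with θ hθ
    rw [slope_def_field]
    have hconv := hf.2 (Set.mem_univ p) (Set.mem_univ y)
      (by linarith [hθ.2] : (0:ℝ) ≤ 1 - θ) (le_of_lt hθ.1) (by ring)
    have heq : (1 - θ) • p + θ • y = p + θ • d := by rw [hd]; module
    rw [heq] at hconv
    simp only [smul_eq_mul] at hconv
    have h00 : f (p + (0:ℝ) • d) = f p := by simp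
    rw [h00]
    rw [sub_zero, div_le_iff₀ hθ.1]
    nlinarith [hconv]
  linarith

private lemma isProx_subgrad {g : EuclideanSpace ℝ (Fin n) → ℝ} (hg : ConvexOn ℝ Set.univ g)
    {η : ℝ} (hη : 0 < η) {v z : EuclideanSpace ℝ (Fin n)} (hz : IsProx g η v z)
    (y : EuclideanSpace ℝ (Fin n)) :
    g z + 1 / η * ⟪v - z, y - z⟫ ≤ g y := by
  set c := 1 / (2 * η) with hc
  have hcpos : 0 < c := by rw [hc]; positivity
  have key : ∀ θ : ℝ, 0 < θ → θ ≤ 1 →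
      g z - g y - 2 * c * ⟪z - v, y - z⟫ ≤ θ * (c * ‖y - z‖ ^ 2) := by
    intro θ hθ hθ1
    have h1 := hz (z + θ • (y - z))
    have h2 : g (z + θ • (y - z)) ≤ (1 - θ) * g z + θ * g y := by
      have hconv := hg.2 (Set.mem_univ z) (Set.mem_univ y)
        (by linarith : (0:ℝ) ≤ 1 - θ) (le_of_lt hθ) (by ring)
      have heq : (1 - θ) • z + θ • y = z + θ • (y - z) := by module
      rw [heq] at hconv
      simpa using hconv
    have h3 : ‖z + θ • (y - z) - v‖ ^ 2
        = ‖z - v‖ ^ 2 + 2 * θ * ⟪z - v, y - z⟫ + θ ^ 2 * ‖y - z‖ ^ 2 := by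
      have heq : z + θ • (y - z) - v = (z - v) + θ • (y - z) := by module
      rw [heq, norm_add_sq_real, real_inner_smul_right, norm_smul]
      simp [mul_pow, sq_abs]
      ring
    rw [h3] at h1
    have h5 : θ * (g z - g y - 2 * c * ⟪z - v, y - z⟫ - θ * (c * ‖y - z‖ ^ 2)) ≤ 0 := by
      nlinarith [h1, h2]
    nlinarith [h5, hθ]
  have hA := aux_limit (by positivity) key
  have h2c : 2 * c * ⟪z - v, y - z⟫ = - (1 / η * ⟪v - z, y - z⟫) := by
    have hip : (⟪v - z, y - z⟫ : ℝ) = -⟪z - v, y - z⟫ := by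
      have : v - z = -(z - v) := by abel
      rw [this, inner_neg_left]
    rw [hip, hc]
    field_simp
  rw [h2c] at hA
  linarith

private lemma exists_isProx {g : EuclideanSpace ℝ (Fin n) → ℝ} (hg : ConvexOn ℝ Set.univ g)
    {η : ℝ} (hη : 0 < η) (v : EuclideanSpace ℝ (Fin n)) : ∃ z, IsProx g η v z := by
  have hgc : Continuous g := by
    have := hg.continuousOn isOpen_univ
    exact continuousOn_univ.mp this
  set c := 1 / (2 * η) with hc
  have hcpos : 0 < c := by rw [hc]; positivity
  set φ : EuclideanSpace ℝ (Fin n) → ℝ := fun x => g x + c * ‖x - v‖ ^ 2 with hφ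
  have hφc : Continuous φ := by
    exact hgc.add (continuous_const.mul ((continuous_id.sub continuous_const).norm.pow 2))
  obtain ⟨w, hw, hwmin⟩ := (isCompact_closedBall v 1).exists_isMinOn
    ⟨v, Metric.mem_closedBall_self zero_le_one⟩ hgc.continuousOn
  set m := g w with hm
  set R := max 1 ((g v - m) / c) with hR
  have hR1 : (1:ℝ) ≤ R := le_max_left _ _
  have hcR : g v - m ≤ c * R := by
    have h := le_max_right 1 ((g v - m) / c)
    rw [div_le_iff₀ hcpos] at h
    linarith [h]
  have hout : ∀ x : EuclideanSpace ℝ (Fin n), R < ‖x - v‖ → φ v ≤ φ x := by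
    intro x hx
    set r := ‖x - v‖ with hr
    have hr1 : 1 < r := lt_of_le_of_lt hR1 hx
    have hrpos : 0 < r := by linarith
    set y := v + r⁻¹ • (x - v) with hy
    have hyconv : (1 - r⁻¹) • v + r⁻¹ • x = y := by rw [hy]; module
    have hymem : y ∈ Metric.closedBall v 1 := by
      rw [Metric.mem_closedBall, dist_eq_norm, hy]
      have h4 : v + r⁻¹ • (x - v) - v = r⁻¹ • (x - v) := by abel
      rw [h4, norm_smul, Real.norm_eq_abs, abs_of_pos (inv_pos.mpr hrpos), ← hr,
        inv_mul_cancel₀ (ne_of_gt hrpos)]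
    have hgy : g y ≤ (1 - r⁻¹) * g v + r⁻¹ * g x := by
      have h0 : (0:ℝ) ≤ 1 - r⁻¹ := by
        rw [sub_nonneg]
        exact le_of_lt (inv_lt_one_of_one_lt₀ hr1)
      have h1 : (0:ℝ) ≤ r⁻¹ := by positivity
      have hconv := hg.2 (Set.mem_univ v) (Set.mem_univ x) h0 h1 (by ring)
      rw [hyconv] at hconv
      simpa using hconv
    have hmy : m ≤ g y := hwmin hymem
    have key : r * m ≤ (r - 1) * g v + g x := by
      have h6 := mul_le_mul_of_nonneg_left (hmy.trans hgy) (le_of_lt hrpos)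
      have h7 : r * ((1 - r⁻¹) * g v + r⁻¹ * g x) = (r - 1) * g v + g x := by
        field_simp
      rw [h7] at h6
      exact h6
    have hint1 : 0 ≤ r * (c * R - (g v - m)) :=
      mul_nonneg (le_of_lt hrpos) (by linarith)
    have hint2 : 0 < c * r * (r - R) :=
      mul_pos (mul_pos hcpos hrpos) (by linarith)
    have hφv : φ v = g v := by simp [hφ]
    have hφx : φ x = g x + c * r ^ 2 := by rw [hφ]
    rw [hφv, hφx]
    nlinarith [key, hint1, hint2]
  have hRpos : (0:ℝ) < R := by linarith
  obtain ⟨z, hzmem, hzmin⟩ := (isCompact_closedBall v R).exists_isMinOn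
    ⟨v, Metric.mem_closedBall_self (le_of_lt hRpos)⟩ hφc.continuousOn
  refine ⟨z, fun x => ?_⟩
  by_cases hx : x ∈ Metric.closedBall v R
  · exact hzmin hx
  · have hx' : R < ‖x - v‖ := by
      rw [Metric.mem_closedBall, dist_eq_norm, not_le] at hx
      exact hx
    exact le_trans (hzmin (Metric.mem_closedBall_self (le_of_lt hRpos))) (hout x hx')

private lemma one_step (f g : EuclideanSpace ℝ (Fin n) → ℝ)
    (hf : ConvexOn ℝ Set.univ f) (hfd : Differentiable ℝ f)
    (hg : ConvexOn ℝ Set.univ g) (Cf : ℝ) (hCf : 0 < Cf)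
    (hlip : ∀ x y, ‖gradient f x - gradient f y‖ ≤ Cf * ‖x - y‖)
    (η : ℝ) (hη : 0 < η) (hη' : η ≤ 1 / Cf)
    (p q z : EuclideanSpace ℝ (Fin n))
    (hq : IsProx g η (p - η • gradient f p) q) :
    f q + g q ≤ f z + g z + 1 / (2 * η) * (‖p - z‖ ^ 2 - ‖q - z‖ ^ 2) := by
  set G := gradient f p with hG
  have hCfinv : Cf ≤ 1 / η := by
    rw [le_div_iff₀ hη]
    have := (le_div_iff₀ hCf).mp hη'
    nlinarith [this]
  have hd : f q ≤ f p + ⟪G, q - p⟫ + Cf / 2 * ‖q - p‖ ^ 2 :=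
    descent_lemma f hfd Cf hlip p q
  have hCfη : Cf / 2 * ‖q - p‖ ^ 2 ≤ 1 / (2 * η) * ‖q - p‖ ^ 2 := by
    apply mul_le_mul_of_nonneg_right _ (sq_nonneg _)
    have h1 : 1 / (2 * η) = (1 / η) / 2 := by ring
    linarith
  have hcv : f p + ⟪G, z - p⟫ ≤ f z := convex_grad_ineq f hf hfd p z
  have hsub := isProx_subgrad hg hη hq z
  have hv : p - η • G - q = (p - q) - η • G := by module
  rw [hv, inner_sub_left, real_inner_smul_left] at hsub
  have hsub' : 1 / η * (⟪p - q, z - q⟫ - η * ⟪G, z - q⟫) = 1 / η * ⟪p - q, z - q⟫ - ⟪G, z - q⟫ := by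
    field_simp
  rw [hsub'] at hsub
  have hGsplit : (⟪G, z - p⟫ : ℝ) = ⟪G, z - q⟫ + ⟪G, q - p⟫ := by
    rw [← inner_add_right]
    congr 1
    abel
  rw [hGsplit] at hcv
  have hpz : p - z = (p - q) + (q - z) := by abel
  have hnorm : ‖p - z‖ ^ 2 = ‖p - q‖ ^ 2 + 2 * ⟪p - q, q - z⟫ + ‖q - z‖ ^ 2 := by
    rw [hpz, norm_add_sq_real]
  have hcomm : (⟪p - q, q - z⟫ : ℝ) = -⟪p - q, z - q⟫ := by
    have : q - z = -(z - q) := by abel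
    rw [this, inner_neg_right]
  have hnp : ‖p - q‖ = ‖q - p‖ := norm_sub_rev p q
  have hgoalrhs : 1 / (2 * η) * (‖p - z‖ ^ 2 - ‖q - z‖ ^ 2)
      = 1 / (2 * η) * ‖q - p‖ ^ 2 - 1 / η * ⟪p - q, z - q⟫ := by
    rw [hnorm, hcomm, hnp]
    field_simp
    ring
  rw [hgoalrhs]
  linarith [hd, hCfη, hcv, hsub]

/-- `O(1/t)` convergence of proximal gradient descent with constant step size. -/
theorem prox_grad_convergence_rate (f g : EuclideanSpace ℝ (Fin n) → ℝ)
    (hf : ConvexOn ℝ Set.univ f) (hfd : Differentiable ℝ f)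
    (hg : ConvexOn ℝ Set.univ g) (Cf : ℝ) (hCf : 0 < Cf)
    (hlip : ∀ x y, ‖gradient f x - gradient f y‖ ≤ Cf * ‖x - y‖)
    (η : ℝ) (hη : 0 < η) (hη' : η ≤ 1 / Cf)
    (xstar : EuclideanSpace ℝ (Fin n)) (hmin : ∀ y, f xstar + g xstar ≤ f y + g y)
    (x : ℕ → EuclideanSpace ℝ (Fin n))
    (hiter : ∀ t : ℕ, x (t + 1) = prox g η (x t - η • gradient f (x t))) :
    ∀ t : ℕ, 1 ≤ t →
      f (x t) + g (x t) - (f xstar + g xstar) ≤ ‖x 0 - xstar‖ ^ 2 / (2 * t * η) := by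
  have hprox : ∀ s : ℕ, IsProx g η (x s - η • gradient f (x s)) (x (s + 1)) := by
    intro s
    rw [hiter s, prox]
    have hex := exists_isProx hg hη (x s - η • gradient f (x s))
    rw [dif_pos hex]
    exact hex.choose_spec
  have step : ∀ (s : ℕ) (z : EuclideanSpace ℝ (Fin n)),
      f (x (s + 1)) + g (x (s + 1)) ≤ f z + g z +
        1 / (2 * η) * (‖x s - z‖ ^ 2 - ‖x (s + 1) - z‖ ^ 2) :=
    fun s z => one_step f g hf hfd hg Cf hCf hlip η hη hη' (x s) (x (s + 1)) z (hprox s)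
  have mono : ∀ s : ℕ, f (x (s + 1)) + g (x (s + 1)) ≤ f (x s) + g (x s) := by
    intro s
    have key := step s (x s)
    rw [sub_self, norm_zero] at key
    have hc : (0:ℝ) ≤ 1 / (2 * η) := by positivity
    nlinarith [sq_nonneg ‖x (s + 1) - x s‖]
  have sum : ∀ t : ℕ, (t : ℝ) * (f (x t) + g (x t) - (f xstar + g xstar)) ≤
      1 / (2 * η) * (‖x 0 - xstar‖ ^ 2 - ‖x t - xstar‖ ^ 2) := by
    intro t
    induction t with
    | zero => simp
    | succ s ih =>
      have hstep := step s xstar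
      have hmono := mono s
      have hmul : (s : ℝ) * (f (x (s + 1)) + g (x (s + 1))) ≤ (s : ℝ) * (f (x s) + g (x s)) :=
        mul_le_mul_of_nonneg_left hmono (Nat.cast_nonneg s)
      push_cast
      nlinarith [ih, hstep, hmul]
  intro t ht
  have ht' : (1:ℝ) ≤ (t : ℝ) := by exact_mod_cast ht
  have htpos : (0:ℝ) < (t : ℝ) := by linarith
  have h1 : (t : ℝ) * (f (x t) + g (x t) - (f xstar + g xstar)) ≤
      1 / (2 * η) * ‖x 0 - xstar‖ ^ 2 := by
    have hs := sum t
    have hnn : (0:ℝ) ≤ 1 / (2 * η) * ‖x t - xstar‖ ^ 2 := by positivity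
    nlinarith [hs, hnn]
  rw [le_div_iff₀ (by positivity : (0:ℝ) < 2 * (t : ℝ) * η)]
  have h2 : 2 * η * ((t : ℝ) * (f (x t) + g (x t) - (f xstar + g xstar))) ≤
      2 * η * (1 / (2 * η) * ‖x 0 - xstar‖ ^ 2) :=
    mul_le_mul_of_nonneg_left h1 (by positivity)
  have h3 : 2 * η * (1 / (2 * η) * ‖x 0 - xstar‖ ^ 2) = ‖x 0 - xstar‖ ^ 2 := by
    field_simp
  rw [h3] at h2
  nlinarith [h2]
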